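/- Let G be a finite simple graph with f(G) ≥ 1. Then |V(G)| ≥ χ(G) + 2, and |V(G)| = χ(G) + 2 only when G is isomorphic to K_{χ(G)−3} + C₅. -/

import Mathlib

open SimpleGraph

/-- The chromatic number of `G` as a natural number. -/
noncomputable def chi {V : Type*} (G : SimpleGraph V) : ℕ := G.chromaticNumber.toNat

/-- The independence number of `G`: the largest size of a set of pairwise
non-adjacent vertices. -/
noncomputable def indepNum {V : Type*} (G : SimpleGraph V) : ℕ :=
  sSup {n | ∃ s : Finset V, s.card = n ∧ ∀ u ∈ s, ∀ v ∈ s, u ≠ v → ¬ G.Adj u v}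

/-- The join `G + H` of two graphs: all edges of `G` and `H` together with all
edges between the two vertex sets. -/
def SimpleGraph.join {α β : Type*} (G : SimpleGraph α) (H : SimpleGraph β) :
    SimpleGraph (α ⊕ β) where
  Adj x y := match x, y with
    | Sum.inl a, Sum.inl b => G.Adj a b
    | Sum.inr a, Sum.inr b => H.Adj a b
    | Sum.inl _, Sum.inr _ => True
    | Sum.inr _, Sum.inl _ => True
  symm := ⟨by rintro (a | a) (b | b) h <;> first | trivial | exact G.adj_symm h | exact H.adj_symm h⟩
  loopless := ⟨by rintro (a | a) h <;> first | exact G.irrefl h | exact H.irrefl h⟩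


section Rel
variable {V : Type} (N : V → V → Prop)
  (hsymm : ∀ {u v}, N u v → N v u)
  (hne : ∀ {u v}, N u v → u ≠ v)
  (hM3 : ∀ u1 v1 u2 v2 u3 v3, N u1 v1 → N u2 v2 → N u3 v3 →
    u1 ≠ u2 → u1 ≠ v2 → v1 ≠ u2 → v1 ≠ v2 → u1 ≠ u3 → u1 ≠ v3 → v1 ≠ u3 → v1 ≠ v3 →
    u2 ≠ u3 → u2 ≠ v3 → v2 ≠ u3 → v2 ≠ v3 → False)
  (hR4 : ∀ p q : V, ∃ u v, u ≠ p ∧ u ≠ q ∧ v ≠ p ∧ v ≠ q ∧ N u v)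
  (hT : ∀ x y z : V, N x y → N x z → N y z → False)

include hsymm hne hR4 in
lemma pick (a b c d : V)
    (meets : ∀ α β, N α β → α = a ∨ α = b ∨ α = c ∨ α = d ∨ β = a ∨ β = b ∨ β = c ∨ β = d)
    (noSb : ∀ x, x ≠ a → x ≠ b → x ≠ c → x ≠ d → ¬ N b x)
    (noSd : ∀ x, x ≠ a → x ≠ b → x ≠ c → x ≠ d → ¬ N d x) : N b d := by
  obtain ⟨α, β, h1, h2, h3, h4, hN⟩ := hR4 a c
  rcases meets α β hN with h | h | h | h | h | h | h | h
  · exact absurd h h1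
  · subst h
    by_cases hβ : β = d
    · subst hβ; exact hN
    · exact absurd hN (noSb β h3 (Ne.symm (hne hN)) h4 hβ)
  · exact absurd h h2
  · subst h
    by_cases hβ : β = b
    · subst hβ; exact hsymm hN
    · exact absurd hN (noSd β h3 hβ h4 (Ne.symm (hne hN)))
  · exact absurd h h3
  · subst h
    by_cases hα : α = d
    · subst hα; exact hsymm hN
    · exact absurd (hsymm hN) (noSb α h1 (hne hN) h2 hα)
  · exact absurd h h4
  · subst h
    by_cases hα : α = b
    · subst hα; exact hN
    · exact absurd (hsymm hN) (noSd α h1 hα h2 (hne hN))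

include hsymm hne hM3 hR4 hT in
lemma dead2 (p q r s : V) (hpq : N p q) (hrs : N r s)
    (hpr : p ≠ r) (hps : p ≠ s) (hqr : q ≠ r) (hqs : q ≠ s)
    (noSq : ∀ x, x ≠ p → x ≠ q → x ≠ r → x ≠ s → ¬ N q x)
    (noSr : ∀ x, x ≠ p → x ≠ q → x ≠ r → x ≠ s → ¬ N r x)
    (noSs : ∀ x, x ≠ p → x ≠ q → x ≠ r → x ≠ s → ¬ N s x) : False := by
  have meets : ∀ α β, N α β → α = p ∨ α = q ∨ α = r ∨ α = s ∨ β = p ∨ β = q ∨ β = r ∨ β = s := by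
    intro α β h
    by_contra hc
    push_neg at hc
    obtain ⟨c1, c2, c3, c4, c5, c6, c7, c8⟩ := hc
    exact hM3 p q r s α β hpq hrs h hpr hps hqr hqs (Ne.symm c1) (Ne.symm c5) (Ne.symm c2)
      (Ne.symm c6) (Ne.symm c3) (Ne.symm c7) (Ne.symm c4) (Ne.symm c8)
  have hNqs : N q s := pick N hsymm hne hR4 p q r s meets noSq noSs
  have hNqr : N q r := pick N hsymm hne hR4 p q s r
    (fun α β h => by have := meets α β h; tauto)
    (fun x h1 h2 h3 h4 => noSq x h1 h2 h4 h3)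
    (fun x h1 h2 h3 h4 => noSr x h1 h2 h4 h3)
  exact hT q r s hNqr hNqs hrs

include hsymm hne hM3 hR4 hT in
lemma win (p q r s : V) (hpq : N p q) (hrs : N r s)
    (hpr : p ≠ r) (hps : p ≠ s) (hqr : q ≠ r) (hqs : q ≠ s)
    (hSp : ∃ x, x ≠ p ∧ x ≠ q ∧ x ≠ r ∧ x ≠ s ∧ N p x)
    (hSr : ∃ x, x ≠ p ∧ x ≠ q ∧ x ≠ r ∧ x ≠ s ∧ N r x)
    (noSq : ∀ x, x ≠ p → x ≠ q → x ≠ r → x ≠ s → ¬ N q x)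
    (noSs : ∀ x, x ≠ p → x ≠ q → x ≠ r → x ≠ s → ¬ N s x) :
    ∃ v0 v1 v2 v3 v4 : V,
      (v0 ≠ v1 ∧ v0 ≠ v2 ∧ v0 ≠ v3 ∧ v0 ≠ v4 ∧ v1 ≠ v2 ∧ v1 ≠ v3 ∧ v1 ≠ v4 ∧
        v2 ≠ v3 ∧ v2 ≠ v4 ∧ v3 ≠ v4) ∧
      (N v0 v1 ∧ N v1 v2 ∧ N v2 v3 ∧ N v3 v4 ∧ N v4 v0) ∧
      (¬ N v0 v2 ∧ ¬ N v0 v3 ∧ ¬ N v1 v3 ∧ ¬ N v1 v4 ∧ ¬ N v2 v4) ∧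
      (∀ u v, N u v → u = v0 ∨ u = v1 ∨ u = v2 ∨ u = v3 ∨ u = v4) := by
  obtain ⟨x, hxp, hxq, hxr, hxs, hpx⟩ := hSp
  obtain ⟨y, hyp, hyq, hyr, hys, hry⟩ := hSr
  have meets : ∀ α β, N α β → α = p ∨ α = q ∨ α = r ∨ α = s ∨ β = p ∨ β = q ∨ β = r ∨ β = s := by
    intro α β h
    by_contra hc
    push_neg at hc
    obtain ⟨c1, c2, c3, c4, c5, c6, c7, c8⟩ := hc
    exact hM3 p q r s α β hpq hrs h hpr hps hqr hqs (Ne.symm c1) (Ne.symm c5) (Ne.symm c2)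
      (Ne.symm c6) (Ne.symm c3) (Ne.symm c7) (Ne.symm c4) (Ne.symm c8)
  have hNqs : N q s := pick N hsymm hne hR4 p q r s meets noSq noSs
  -- the two spokes share their endpoint
  have hxy : x = y := by
    by_contra hxy
    exact hM3 p x r y q s hpx hry hNqs hpr (Ne.symm hyp) hxr hxy (hne hpq) hps hxq hxs
      (Ne.symm hqr) (hne hrs) hyq hys
  subst hxy
  -- uniqueness of spokes
  have uniqp : ∀ z, z ≠ p → z ≠ q → z ≠ r → z ≠ s → N p z → z = x := by
    intro z h1 h2 h3 h4 hz
    by_contra hzx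
    exact hM3 p z r x q s hz hry hNqs hpr (Ne.symm hxp) h3 hzx (hne hpq) hps h2 h4
      (Ne.symm hqr) (hne hrs) hxq hxs
  have uniqr : ∀ z, z ≠ p → z ≠ q → z ≠ r → z ≠ s → N r z → z = x := by
    intro z h1 h2 h3 h4 hz
    by_contra hzx
    exact hM3 r z p x q s hz hpx hNqs (Ne.symm hpr) (Ne.symm hxr) h1 hzx (Ne.symm hqr)
      (hne hrs) h2 h4 (hne hpq) hps hxq hxs
  have nPR : ¬ N p r := fun h => hT p r x h hpx hry
  have nPS : ¬ N p s := fun h => hT p q s hpq h hNqs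
  have nQR : ¬ N q r := fun h => hT q r s h hNqs hrs
  have nQX : ¬ N q x := noSq x hxp hxq hxr hxs
  have nSX : ¬ N s x := noSs x hxp hxq hxr hxs
  refine ⟨p, q, s, r, x,
    ⟨hne hpq, hps, hpr, Ne.symm hxp, hqs, hqr, Ne.symm hxq, Ne.symm (hne hrs),
      Ne.symm hxs, Ne.symm hxr⟩,
    ⟨hpq, hNqs, hsymm hrs, hry, hsymm hpx⟩,
    ⟨nPS, nPR, nQR, nQX, nSX⟩, ?_⟩
  intro u v hN
  have m := meets u v hN
  have hu4 : u = p ∨ u = q ∨ u = r ∨ u = s ∨ (u ≠ p ∧ u ≠ q ∧ u ≠ r ∧ u ≠ s) := by tauto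
  rcases hu4 with h | h | h | h | ⟨h1, h2, h3, h4⟩
  · tauto
  · tauto
  · tauto
  · tauto
  rcases m with h | h | h | h | h | h | h | h
  · exact absurd h h1
  · exact absurd h h2
  · exact absurd h h3
  · exact absurd h h4
  · subst h; have := uniqp u h1 h2 h3 h4 (hsymm hN); tauto
  · subst h; exact absurd (hsymm hN) (noSq u h1 h2 h3 h4)
  · subst h; have := uniqr u h1 h2 h3 h4 (hsymm hN); tauto
  · subst h; exact absurd (hsymm hN) (noSs u h1 h2 h3 h4)

section Tri
variable
  (hF1 : ∀ w x y z : V, N w x → N w y → N w z → N x y → N x z → N y z → False)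
  (hF2 : ∀ x y z u v : V, N x y → N x z → N y z → N u v →
    u ≠ x → u ≠ y → u ≠ z → v ≠ x → v ≠ y → v ≠ z → False)

include hsymm hne hR4 in
lemma spoke_aux (p q r : V)
    (hmeets : ∀ α β, N α β → α = p ∨ α = q ∨ α = r ∨ β = p ∨ β = q ∨ β = r) :
    ∃ u, u ≠ p ∧ u ≠ q ∧ u ≠ r ∧ N p u := by
  obtain ⟨α, β, hα1, hα2, hβ1, hβ2, hαβ⟩ := hR4 q r
  have hab := hne hαβ
  rcases hmeets α β hαβ with h | h | h | h | h | h
  · subst h; exact ⟨β, Ne.symm hab, hβ1, hβ2, hαβ⟩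
  · exact absurd h hα1
  · exact absurd h hα2
  · subst h; exact ⟨α, hab, hα1, hα2, hsymm hαβ⟩
  · exact absurd h hβ1
  · exact absurd h hβ2

include hsymm hne hM3 hR4 hF1 hF2 in
lemma noTriangle : ∀ x y z : V, N x y → N x z → N y z → False := by
  intro x y z hxy hxz hyz
  have meets : ∀ α β, N α β → α = x ∨ α = y ∨ α = z ∨ β = x ∨ β = y ∨ β = z := by
    intro α β h
    by_contra hc
    push_neg at hc
    obtain ⟨h1, h2, h3, h4, h5, h6⟩ := hc
    exact hF2 x y z α β hxy hxz hyz h h1 h2 h3 h4 h5 h6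
  have hxy' := hne hxy
  have hxz' := hne hxz
  have hyz' := hne hyz
  obtain ⟨u, hux, huy, huz, hxu⟩ := spoke_aux N hsymm hne hR4 x y z meets
  obtain ⟨v, hvy, hvx, hvz, hyv⟩ := spoke_aux N hsymm hne hR4 y x z
    (fun α β h => by have := meets α β h; tauto)
  obtain ⟨w, hwz, hwx, hwy, hzw⟩ := spoke_aux N hsymm hne hR4 z x y
    (fun α β h => by have := meets α β h; tauto)
  by_cases huv : u = v
  · -- triangle x y u
    subst huv
    by_cases hwu : w = u
    · subst hwu
      exact hF1 w x y z (hsymm hxu) (hsymm hyv) (hsymm hzw) hxy hxz hyz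
    · -- edge z w disjoint from triangle {x, y, u}
      exact hF2 x y u z w hxy hxu hyv hzw hxz'.symm hyz'.symm (Ne.symm huz) hwx hwy hwu
  · by_cases hwu : w = u
    · -- triangle x z u, edge (y, v)
      subst hwu
      exact hF2 x z w y v hxz hxu hzw hyv (Ne.symm hxy') hyz' (Ne.symm huy) hvx hvz (Ne.symm huv)
    · by_cases hwv : w = v
      · -- triangle y z v, edge (x, u)
        subst hwv
        exact hF2 y z w x u hyz hyv hzw hxu hxy' hxz' (Ne.symm hwx) huy huz huv
      · -- 3-matching (x,u), (y,v), (z,w)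
        exact hM3 x u y v z w hxu hyv hzw hxy' (Ne.symm hvx) huy huv hxz' (Ne.symm hwx) huz
          (Ne.symm hwu) hyz' (Ne.symm hwy) hvz (Ne.symm hwv)
end Tri

include hne hM3 hT in
lemma hD2aux (p q r s x y : V) (hpq : N p q) (hrs : N r s) (hpx : N p x) (hqy : N q y)
    (h1 : p ≠ r) (h2 : p ≠ s) (h3 : q ≠ r) (h4 : q ≠ s)
    (k1 : x ≠ p) (k2 : x ≠ q) (k3 : x ≠ r) (k4 : x ≠ s)
    (l1 : y ≠ p) (l2 : y ≠ q) (l3 : y ≠ r) (l4 : y ≠ s) : False := by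
  by_cases hxy : x = y
  · subst hxy; exact hT p q x hpq hpx hqy
  · exact hM3 p x q y r s hpx hqy hrs (hne hpq) (Ne.symm l1) k2 hxy h1 h2 k3 k4 h3 h4 l3 l4

include hsymm hne hM3 hR4 hT in
lemma structC5 (w0 : V) :
    ∃ v0 v1 v2 v3 v4 : V,
      (v0 ≠ v1 ∧ v0 ≠ v2 ∧ v0 ≠ v3 ∧ v0 ≠ v4 ∧ v1 ≠ v2 ∧ v1 ≠ v3 ∧ v1 ≠ v4 ∧
        v2 ≠ v3 ∧ v2 ≠ v4 ∧ v3 ≠ v4) ∧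
      (N v0 v1 ∧ N v1 v2 ∧ N v2 v3 ∧ N v3 v4 ∧ N v4 v0) ∧
      (¬ N v0 v2 ∧ ¬ N v0 v3 ∧ ¬ N v1 v3 ∧ ¬ N v1 v4 ∧ ¬ N v2 v4) ∧
      (∀ u v, N u v → u = v0 ∨ u = v1 ∨ u = v2 ∨ u = v3 ∨ u = v4) := by
  classical
  obtain ⟨a, b, -, -, -, -, hab⟩ := hR4 w0 w0
  obtain ⟨c, d, hca, hcb, hda, hdb, hcd⟩ := hR4 a b
  have hab' := hne hab
  have hcd' := hne hcd
  -- spoke predicates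
  set Sa := ∃ x, x ≠ a ∧ x ≠ b ∧ x ≠ c ∧ x ≠ d ∧ N a x with hSa_def
  set Sb := ∃ x, x ≠ a ∧ x ≠ b ∧ x ≠ c ∧ x ≠ d ∧ N b x with hSb_def
  set Sc := ∃ x, x ≠ a ∧ x ≠ b ∧ x ≠ c ∧ x ≠ d ∧ N c x with hSc_def
  set Sd := ∃ x, x ≠ a ∧ x ≠ b ∧ x ≠ c ∧ x ≠ d ∧ N d x with hSd_def
  have hD2ab : Sa → Sb → False := by
    rintro ⟨x, x1, x2, x3, x4, hx⟩ ⟨y, y1, y2, y3, y4, hy⟩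
    exact hD2aux N hne hM3 hT a b c d x y hab hcd hx hy (Ne.symm hca) (Ne.symm hda)
      (Ne.symm hcb) (Ne.symm hdb) x1 x2 x3 x4 y1 y2 y3 y4
  have hD2cd : Sc → Sd → False := by
    rintro ⟨x, x1, x2, x3, x4, hx⟩ ⟨y, y1, y2, y3, y4, hy⟩
    exact hD2aux N hne hM3 hT c d a b x y hcd hab hx hy hca hcb hda hdb
      x3 x4 x1 x2 y3 y4 y1 y2
  -- helpers to massage spoke-freeness
  by_cases hA : Sa
  · have hB : ¬ Sb := fun h => hD2ab hA h
    by_cases hC : Sc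
    · have hD : ¬ Sd := fun h => hD2cd hC h
      refine win N hsymm hne hM3 hR4 hT a b c d hab hcd (Ne.symm hca) (Ne.symm hda)
        (Ne.symm hcb) (Ne.symm hdb)
        (by obtain ⟨x, x1, x2, x3, x4, hx⟩ := hA; exact ⟨x, x1, x2, x3, x4, hx⟩)
        (by obtain ⟨x, x1, x2, x3, x4, hx⟩ := hC; exact ⟨x, x1, x2, x3, x4, hx⟩)
        (fun x h1 h2 h3 h4 hN => hB ⟨x, h1, h2, h3, h4, hN⟩)
        (fun x h1 h2 h3 h4 hN => hD ⟨x, h1, h2, h3, h4, hN⟩)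
    · by_cases hD : Sd
      · refine win N hsymm hne hM3 hR4 hT a b d c hab (hsymm hcd) (Ne.symm hda)
          (Ne.symm hca) (Ne.symm hdb) (Ne.symm hcb)
          (by obtain ⟨x, x1, x2, x3, x4, hx⟩ := hA; exact ⟨x, x1, x2, x4, x3, hx⟩)
          (by obtain ⟨x, x1, x2, x3, x4, hx⟩ := hD; exact ⟨x, x1, x2, x4, x3, hx⟩)
          (fun x h1 h2 h3 h4 hN => hB ⟨x, h1, h2, h4, h3, hN⟩)
          (fun x h1 h2 h3 h4 hN => hC ⟨x, h1, h2, h4, h3, hN⟩)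
      · exact absurd (dead2 N hsymm hne hM3 hR4 hT a b c d hab hcd (Ne.symm hca)
          (Ne.symm hda) (Ne.symm hcb) (Ne.symm hdb)
          (fun x h1 h2 h3 h4 hN => hB ⟨x, h1, h2, h3, h4, hN⟩)
          (fun x h1 h2 h3 h4 hN => hC ⟨x, h1, h2, h3, h4, hN⟩)
          (fun x h1 h2 h3 h4 hN => hD ⟨x, h1, h2, h3, h4, hN⟩)) (fun h => h)
  · by_cases hB : Sb
    · by_cases hC : Sc
      · have hD : ¬ Sd := fun h => hD2cd hC h
        refine win N hsymm hne hM3 hR4 hT b a c d (hsymm hab) hcd (Ne.symm hcb)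
          (Ne.symm hdb) (Ne.symm hca) (Ne.symm hda)
          (by obtain ⟨x, x1, x2, x3, x4, hx⟩ := hB; exact ⟨x, x2, x1, x3, x4, hx⟩)
          (by obtain ⟨x, x1, x2, x3, x4, hx⟩ := hC; exact ⟨x, x2, x1, x3, x4, hx⟩)
          (fun x h1 h2 h3 h4 hN => hA ⟨x, h2, h1, h3, h4, hN⟩)
          (fun x h1 h2 h3 h4 hN => hD ⟨x, h2, h1, h3, h4, hN⟩)
      · by_cases hD : Sd
        · refine win N hsymm hne hM3 hR4 hT b a d c (hsymm hab) (hsymm hcd) (Ne.symm hdb)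
            (Ne.symm hcb) (Ne.symm hda) (Ne.symm hca)
            (by obtain ⟨x, x1, x2, x3, x4, hx⟩ := hB; exact ⟨x, x2, x1, x4, x3, hx⟩)
            (by obtain ⟨x, x1, x2, x3, x4, hx⟩ := hD; exact ⟨x, x2, x1, x4, x3, hx⟩)
            (fun x h1 h2 h3 h4 hN => hA ⟨x, h2, h1, h4, h3, hN⟩)
            (fun x h1 h2 h3 h4 hN => hC ⟨x, h2, h1, h4, h3, hN⟩)
        · exact absurd (dead2 N hsymm hne hM3 hR4 hT b a c d (hsymm hab) hcd (Ne.symm hcb)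
            (Ne.symm hdb) (Ne.symm hca) (Ne.symm hda)
            (fun x h1 h2 h3 h4 hN => hA ⟨x, h2, h1, h3, h4, hN⟩)
            (fun x h1 h2 h3 h4 hN => hC ⟨x, h2, h1, h3, h4, hN⟩)
            (fun x h1 h2 h3 h4 hN => hD ⟨x, h2, h1, h3, h4, hN⟩)) (fun h => h)
    · by_cases hC : Sc
      · exact absurd (dead2 N hsymm hne hM3 hR4 hT c d a b hcd hab hca hcb hda hdb
          (fun x h1 h2 h3 h4 hN => hD2cd hC ⟨x, h3, h4, h1, h2, hN⟩)
          (fun x h1 h2 h3 h4 hN => hA ⟨x, h3, h4, h1, h2, hN⟩)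
          (fun x h1 h2 h3 h4 hN => hB ⟨x, h3, h4, h1, h2, hN⟩)) (fun h => h)
      · exact absurd (dead2 N hsymm hne hM3 hR4 hT d c b a (hsymm hcd) (hsymm hab) hdb hda
          hcb hca
          (fun x h1 h2 h3 h4 hN => hC ⟨x, h4, h3, h2, h1, hN⟩)
          (fun x h1 h2 h3 h4 hN => hB ⟨x, h4, h3, h2, h1, hN⟩)
          (fun x h1 h2 h3 h4 hN => hA ⟨x, h4, h3, h2, h1, hN⟩)) (fun h => h)
end Rel

section Merges
open Finset
variable {V : Type} [Fintype V]

lemma merge_bound (G : SimpleGraph V) (r : V → V) (D : Finset V)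
    (hD : ∀ v, r v ∉ D) (hadj : ∀ u v, G.Adj u v → r u ≠ r v) :
    chi G + D.card ≤ Fintype.card V := by
  classical
  let C : G.Coloring ↥(Finset.univ \ D) :=
    SimpleGraph.Coloring.mk (fun v => ⟨r v, by simp [hD v]⟩)
      (fun {u v} h hc => hadj u v h (congrArg Subtype.val hc))
  have hcol := C.colorable.chromaticNumber_le
  have h1 : chi G ≤ Fintype.card ↥(Finset.univ \ D) := ENat.toNat_le_of_le_coe hcol
  have h2 : Fintype.card ↥(Finset.univ \ D) = Fintype.card V - D.card := by
    rw [Fintype.card_coe, Finset.card_univ_diff]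
  have h3 : D.card ≤ Fintype.card V := Finset.card_le_univ D
  omega

lemma merge3 (G : SimpleGraph V) (u1 v1 u2 v2 u3 v3 : V)
    (h1 : u1 ≠ v1 ∧ ¬ G.Adj u1 v1) (h2 : u2 ≠ v2 ∧ ¬ G.Adj u2 v2)
    (h3 : u3 ≠ v3 ∧ ¬ G.Adj u3 v3)
    (d1 : u1 ≠ u2) (d2 : u1 ≠ v2) (d3 : v1 ≠ u2) (d4 : v1 ≠ v2)
    (d5 : u1 ≠ u3) (d6 : u1 ≠ v3) (d7 : v1 ≠ u3) (d8 : v1 ≠ v3)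
    (d9 : u2 ≠ u3) (d10 : u2 ≠ v3) (d11 : v2 ≠ u3) (d12 : v2 ≠ v3) :
    chi G + 3 ≤ Fintype.card V := by
  classical
  have hcard : ({v1, v2, v3} : Finset V).card = 3 := by
    rw [card_insert_of_notMem (by simp [d4, d8]), card_insert_of_notMem (by simp [d12]),
      card_singleton]
  have := merge_bound G (fun w => if w = v1 then u1 else if w = v2 then u2 else
      if w = v3 then u3 else w) {v1, v2, v3}
    (by
      intro v
      simp only [mem_insert, mem_singleton]
      split_ifs <;> push_neg <;>
        refine ⟨?_, ?_, ?_⟩ <;> first | assumption | (intro h; subst h; tauto))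
    (by
      intro u v ha hEq
      have hne' : u ≠ v := G.ne_of_adj ha
      split_ifs at hEq <;> subst_vars <;> simp_all [G.adj_comm])
  omega

lemma mergeI4 (G : SimpleGraph V) (w x y z : V)
    (h1 : w ≠ x ∧ ¬ G.Adj w x) (h2 : w ≠ y ∧ ¬ G.Adj w y) (h3 : w ≠ z ∧ ¬ G.Adj w z)
    (h4 : x ≠ y ∧ ¬ G.Adj x y) (h5 : x ≠ z ∧ ¬ G.Adj x z) (h6 : y ≠ z ∧ ¬ G.Adj y z) :
    chi G + 3 ≤ Fintype.card V := by
  classical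
  have hcard : ({x, y, z} : Finset V).card = 3 := by
    rw [card_insert_of_notMem (by simp [h4.1, h5.1]), card_insert_of_notMem (by simp [h6.1]),
      card_singleton]
  have := merge_bound G (fun t => if t = x then w else if t = y then w else
      if t = z then w else t) {x, y, z}
    (by
      intro v
      simp only [mem_insert, mem_singleton]
      split_ifs <;> push_neg <;>
        refine ⟨?_, ?_, ?_⟩ <;> first | assumption | (intro h; subst h; tauto))
    (by
      intro u v ha hEq
      have hne' : u ≠ v := G.ne_of_adj ha
      split_ifs at hEq <;> subst_vars <;> simp_all [G.adj_comm])
  omega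

lemma mergeI3pair (G : SimpleGraph V) (x y z u v : V)
    (h1 : x ≠ y ∧ ¬ G.Adj x y) (h2 : x ≠ z ∧ ¬ G.Adj x z) (h3 : y ≠ z ∧ ¬ G.Adj y z)
    (h4 : u ≠ v ∧ ¬ G.Adj u v)
    (d1 : u ≠ x) (d2 : u ≠ y) (d3 : u ≠ z) (d4 : v ≠ x) (d5 : v ≠ y) (d6 : v ≠ z) :
    chi G + 3 ≤ Fintype.card V := by
  classical
  have hcard : ({y, z, v} : Finset V).card = 3 := by
    rw [card_insert_of_notMem (by simp [h3.1, Ne.symm d5]),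
      card_insert_of_notMem (by simp [Ne.symm d6]), card_singleton]
  have := merge_bound G (fun t => if t = y then x else if t = z then x else
      if t = v then u else t) {y, z, v}
    (by
      intro t
      simp only [mem_insert, mem_singleton]
      split_ifs <;> push_neg <;>
        refine ⟨?_, ?_, ?_⟩ <;> first | assumption | (intro h; subst h; tauto))
    (by
      intro a b ha hEq
      have hne' : a ≠ b := G.ne_of_adj ha
      split_ifs at hEq <;> subst_vars <;> simp_all [G.adj_comm])
  omega

lemma mergeI3 (G : SimpleGraph V) (x y z : V)
    (h1 : x ≠ y ∧ ¬ G.Adj x y) (h2 : x ≠ z ∧ ¬ G.Adj x z) (h3 : y ≠ z ∧ ¬ G.Adj y z) :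
    chi G + 2 ≤ Fintype.card V := by
  classical
  have hcard : ({y, z} : Finset V).card = 2 := by
    rw [card_insert_of_notMem (by simp [h3.1]), card_singleton]
  have := merge_bound G (fun t => if t = y then x else if t = z then x else t) {y, z}
    (by
      intro t
      simp only [mem_insert, mem_singleton]
      split_ifs <;> push_neg <;>
        refine ⟨?_, ?_⟩ <;> first | assumption | (intro h; subst h; tauto))
    (by
      intro a b ha hEq
      have hne' : a ≠ b := G.ne_of_adj ha
      split_ifs at hEq <;> subst_vars <;> simp_all [G.adj_comm])
  omega

lemma merge2 (G : SimpleGraph V) (u1 v1 u2 v2 : V)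
    (h1 : u1 ≠ v1 ∧ ¬ G.Adj u1 v1) (h2 : u2 ≠ v2 ∧ ¬ G.Adj u2 v2)
    (d1 : u1 ≠ u2) (d2 : u1 ≠ v2) (d3 : v1 ≠ u2) (d4 : v1 ≠ v2) :
    chi G + 2 ≤ Fintype.card V := by
  classical
  have hcard : ({v1, v2} : Finset V).card = 2 := by
    rw [card_insert_of_notMem (by simp [d4]), card_singleton]
  have := merge_bound G (fun t => if t = v1 then u1 else if t = v2 then u2 else t) {v1, v2}
    (by
      intro t
      simp only [mem_insert, mem_singleton]
      split_ifs <;> push_neg <;>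
        refine ⟨?_, ?_⟩ <;> first | assumption | (intro h; subst h; tauto))
    (by
      intro a b ha hEq
      have hne' : a ≠ b := G.ne_of_adj ha
      split_ifs at hEq <;> subst_vars <;> simp_all [G.adj_comm])
  omega

lemma merge1 (G : SimpleGraph V) (u1 v1 : V) (h1 : u1 ≠ v1 ∧ ¬ G.Adj u1 v1) :
    chi G + 1 ≤ Fintype.card V := by
  classical
  have := merge_bound G (fun t => if t = v1 then u1 else t) {v1}
    (by
      intro t
      simp only [mem_singleton]
      split_ifs <;> first | exact h1.1 | assumption)
    (by
      intro a b ha hEq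
      have hne' : a ≠ b := G.ne_of_adj ha
      split_ifs at hEq <;> subst_vars <;> simp_all [G.adj_comm])
  simp only [Finset.card_singleton] at this
  omega
end Merges

section Iso
open Finset
variable {V : Type} [Fintype V]

lemma build_iso (G : SimpleGraph V) (k : ℕ) (hcard : Fintype.card V = k + 2) (hk : 3 ≤ k)
    (v0 v1 v2 v3 v4 : V)
    (d01 : v0 ≠ v1) (d02 : v0 ≠ v2) (d03 : v0 ≠ v3) (d04 : v0 ≠ v4)
    (d12 : v1 ≠ v2) (d13 : v1 ≠ v3) (d14 : v1 ≠ v4)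
    (d23 : v2 ≠ v3) (d24 : v2 ≠ v4) (d34 : v3 ≠ v4)
    (nA01 : ¬ G.Adj v0 v1) (nA12 : ¬ G.Adj v1 v2) (nA23 : ¬ G.Adj v2 v3)
    (nA34 : ¬ G.Adj v3 v4) (nA40 : ¬ G.Adj v4 v0)
    (A02 : G.Adj v0 v2) (A03 : G.Adj v0 v3) (A13 : G.Adj v1 v3)
    (A14 : G.Adj v1 v4) (A24 : G.Adj v2 v4)
    (conf : ∀ u v, u ≠ v → ¬ G.Adj u v →
      u = v0 ∨ u = v1 ∨ u = v2 ∨ u = v3 ∨ u = v4) :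
    Nonempty (G ≃g SimpleGraph.join (⊤ : SimpleGraph (Fin (k - 3))) (cycleGraph 5)) := by
  classical
  set s : Finset V := {v0, v1, v2, v3, v4} with hs_def
  have hs5 : s.card = 5 := by
    rw [hs_def, card_insert_of_notMem (by simp [d01, d02, d03, d04]),
      card_insert_of_notMem (by simp [d12, d13, d14]),
      card_insert_of_notMem (by simp [d23, d24]),
      card_insert_of_notMem (by simp [d34]), card_singleton]
  have hout : ∀ u v, u ∉ s → u ≠ v → G.Adj u v := by
    intro u v hu huv
    by_contra hA
    rcases conf u v huv hA with h | h | h | h | h <;> subst h <;> simp [hs_def] at hu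
  have hcompl : Fintype.card ↥(sᶜ : Finset V) = k - 3 := by
    rw [Fintype.card_coe, Finset.card_compl, hs5, hcard]
    omega
  let eT : ↥(sᶜ : Finset V) ≃ Fin (k - 3) := Fintype.equivFinOfCardEq hcompl
  let m : Fin 5 → V := fun i =>
    if i.val = 0 then v0 else if i.val = 1 then v2 else
    if i.val = 2 then v4 else if i.val = 3 then v1 else v3
  have hms : ∀ j : Fin 5, m j ∈ s := by
    intro j
    fin_cases j <;> simp +decide [m, hs_def]
  have hcmem : ∀ i, ((eT.symm i : ↥(sᶜ : Finset V)) : V) ∉ s :=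
    fun i => Finset.mem_compl.mp (eT.symm i).2
  let φ : Fin (k - 3) ⊕ Fin 5 → V :=
    Sum.elim (fun i => ((eT.symm i : ↥(sᶜ : Finset V)) : V)) m
  have hvalinj : ∀ i j, ((eT.symm i : ↥(sᶜ : Finset V)) : V) =
      ((eT.symm j : ↥(sᶜ : Finset V)) : V) → i = j :=
    fun i j h => eT.symm.injective (Subtype.coe_injective h)
  have hbij : Function.Bijective φ := by
    constructor
    · rintro (i | i) (j | j) h <;> simp only [φ, Sum.elim_inl, Sum.elim_inr] at h
      · exact congrArg Sum.inl (hvalinj i j h)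
      · exact absurd (h ▸ hms j) (by rw [h]; exact fun hh => hcmem i (h ▸ hh))
      · exact absurd (h ▸ hms i) (fun hh => hcmem j hh)
      · refine congrArg Sum.inr ?_
        fin_cases i <;> fin_cases j <;>
          first
            | rfl
            | exact absurd h (by simp +decide [m, d01, d01.symm, d02, d02.symm, d03, d03.symm, d04, d04.symm, d12, d12.symm, d13, d13.symm, d14, d14.symm, d23, d23.symm, d24, d24.symm, d34, d34.symm])
    · intro v
      by_cases hv : v ∈ s
      · rw [hs_def] at hv
        simp only [Finset.mem_insert, Finset.mem_singleton] at hv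
        rcases hv with h | h | h | h | h
        · exact ⟨Sum.inr ⟨0, by norm_num⟩, by simp +decide [φ, m, h]⟩
        · exact ⟨Sum.inr ⟨3, by norm_num⟩, by simp +decide [φ, m, h]⟩
        · exact ⟨Sum.inr ⟨1, by norm_num⟩, by simp +decide [φ, m, h]⟩
        · exact ⟨Sum.inr ⟨4, by norm_num⟩, by simp +decide [φ, m, h]⟩
        · exact ⟨Sum.inr ⟨2, by norm_num⟩, by simp +decide [φ, m, h]⟩
      · exact ⟨Sum.inl (eT ⟨v, Finset.mem_compl.mpr hv⟩), by simp [φ]⟩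
  refine ⟨RelIso.symm ⟨Equiv.ofBijective φ hbij, ?_⟩⟩
  rintro (i | i) (j | j) <;>
    simp only [Equiv.ofBijective_apply, φ, Sum.elim_inl, Sum.elim_inr]
  · show G.Adj _ _ ↔ (⊤ : SimpleGraph (Fin (k - 3))).Adj i j
    rw [top_adj]
    constructor
    · intro hA heq
      exact G.ne_of_adj hA (by rw [heq])
    · intro hij
      exact hout _ _ (hcmem i) (fun h => hij (hvalinj i j h))
  · show G.Adj _ _ ↔ True
    simp only [iff_true]
    exact hout _ _ (hcmem i) (fun h => hcmem i (h ▸ hms j))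
  · show G.Adj _ _ ↔ True
    simp only [iff_true]
    exact (hout _ _ (hcmem j) (fun h => hcmem j (h ▸ hms i))).symm
  · show G.Adj (m i) (m j) ↔ (cycleGraph 5).Adj i j
    fin_cases i <;> fin_cases j <;>
      first
        | exact iff_of_false (G.irrefl) (by decide)
        | exact iff_of_true (by assumption) (by decide)
        | exact iff_of_false (by assumption) (by decide)
        | exact iff_of_true (G.adj_symm (by assumption)) (by decide)
        | exact iff_of_false (fun hA => absurd (G.adj_symm hA) (by assumption)) (by decide)

end Iso

theorem statement_3 {V : Type} [Fintype V] (G : SimpleGraph V)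
    (hf : G.cliqueNum + 1 ≤ chi G) :
    chi G + 2 ≤ Fintype.card V ∧
    (Fintype.card V = chi G + 2 →
      Nonempty (G ≃g SimpleGraph.join (⊤ : SimpleGraph (Fin (chi G - 3)))
        (cycleGraph 5))) := by
  classical
  set n := Fintype.card V with hn_def
  have hk1 : 1 ≤ chi G := le_trans (Nat.le_add_left 1 _) hf
  have hkn : chi G ≤ n := ENat.toNat_le_of_le_coe (G.colorable_of_fintype).chromaticNumber_le
  have hclique : ∀ s : Finset V, G.IsClique ↑s → s.card + 1 ≤ chi G := by
    intro s hs
    exact le_trans (Nat.add_le_add_right (SimpleGraph.IsClique.card_le_cliqueNum (tc := hs)) 1) hf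
  -- extract a non-edge avoiding a clique-complement
  have hnotclique : ∀ t : Finset V, ¬ G.IsClique ↑(Finset.univ \ t) →
      ∃ u v, u ∉ t ∧ v ∉ t ∧ u ≠ v ∧ ¬ G.Adj u v := by
    intro t h
    rw [SimpleGraph.isClique_iff] at h
    simp only [Set.Pairwise, not_forall] at h
    obtain ⟨u, hu, v, hv, huv, hA⟩ := h
    simp only [Finset.coe_sdiff, Finset.coe_univ, Set.mem_diff, Set.mem_univ, true_and,
      Finset.mem_coe] at hu hv
    exact ⟨u, v, hu, hv, huv, hA⟩
  have part1 : chi G + 2 ≤ n := by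
    by_contra hlt
    push_neg at hlt
    by_cases h3 : ∃ x y z : V, (x ≠ y ∧ ¬ G.Adj x y) ∧ (x ≠ z ∧ ¬ G.Adj x z) ∧
        (y ≠ z ∧ ¬ G.Adj y z)
    · obtain ⟨x, y, z, a1, a2, a3⟩ := h3
      have := mergeI3 G x y z a1 a2 a3
      omega
    · by_cases h2 : ∃ u1 v1 u2 v2 : V, (u1 ≠ v1 ∧ ¬ G.Adj u1 v1) ∧ (u2 ≠ v2 ∧ ¬ G.Adj u2 v2) ∧
          u1 ≠ u2 ∧ u1 ≠ v2 ∧ v1 ≠ u2 ∧ v1 ≠ v2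
      · obtain ⟨u1, v1, u2, v2, a1, a2, d1, d2, d3, d4⟩ := h2
        have := merge2 G u1 v1 u2 v2 a1 a2 d1 d2 d3 d4
        omega
      · by_cases h1 : ∃ p q : V, p ≠ q ∧ ¬ G.Adj p q
        · obtain ⟨p, q, hpq⟩ := h1
          have hmerge := merge1 G p q hpq
          have hn1 : n = chi G + 1 := by omega
          -- one of univ \ {p}, univ \ {q} is a clique
          have hcl : G.IsClique ↑(Finset.univ \ ({p} : Finset V)) ∨
              G.IsClique ↑(Finset.univ \ ({q} : Finset V)) := by
            by_contra hc
            push_neg at hc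
            obtain ⟨α, β, hα, hβ, hαβ, hAαβ⟩ := hnotclique _ hc.1
            obtain ⟨γ, δ, hγ, hδ, hγδ, hAγδ⟩ := hnotclique _ hc.2
            simp only [Finset.mem_singleton] at hα hβ hγ hδ
            -- (α, β) avoids p, must contain q
            have hq : α = q ∨ β = q := by
              by_contra hqq
              push_neg at hqq
              exact h2 ⟨p, q, α, β, hpq, ⟨hαβ, hAαβ⟩, Ne.symm hα, Ne.symm hβ,
                Ne.symm hqq.1, Ne.symm hqq.2⟩
            have hp : γ = p ∨ δ = p := by
              by_contra hpp
              push_neg at hpp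
              exact h2 ⟨p, q, γ, δ, hpq, ⟨hγδ, hAγδ⟩, Ne.symm hpp.1, Ne.symm hpp.2,
                Ne.symm hγ, Ne.symm hδ⟩
            -- get u with ¬Adj q u, u ∉ {p, q} ; v with ¬Adj p v, v ∉ {p, q}
            obtain ⟨u, hu1, hu2, hAu⟩ : ∃ u, u ≠ p ∧ u ≠ q ∧ ¬ G.Adj q u := by
              rcases hq with h | h
              · subst h; exact ⟨β, hβ, Ne.symm hαβ, hAαβ⟩
              · subst h
                exact ⟨α, hα, hαβ, fun hh => hAαβ hh.symm⟩
            obtain ⟨v, hv1, hv2, hAv⟩ : ∃ v, v ≠ p ∧ v ≠ q ∧ ¬ G.Adj p v := by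
              rcases hp with h | h
              · subst h; exact ⟨δ, Ne.symm hγδ, hδ, hAγδ⟩
              · subst h
                exact ⟨γ, hγδ, hγ, fun hh => hAγδ hh.symm⟩
            by_cases huv : u = v
            · subst huv
              exact h3 ⟨p, q, u, hpq, ⟨Ne.symm hv1, hAv⟩, ⟨Ne.symm hu2, hAu⟩⟩
            · exact h2 ⟨q, u, p, v, ⟨Ne.symm hu2, hAu⟩, ⟨Ne.symm hv1, hAv⟩,
                Ne.symm hpq.1, Ne.symm hv2, hu1, huv⟩
          rcases hcl with h | h
          · have := hclique _ h
            rw [Finset.card_sdiff_of_subset (by simp), Finset.card_singleton, Finset.card_univ] at this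
            omega
          · have := hclique _ h
            rw [Finset.card_sdiff_of_subset (by simp), Finset.card_singleton, Finset.card_univ] at this
            omega
        · -- G is complete
          push_neg at h1
          have : G.IsClique ↑(Finset.univ : Finset V) := by
            intro u hu v hv huv
            by_contra hA
            exact hA (h1 u v huv)
          have := hclique _ this
          rw [Finset.card_univ] at this
          omega
  refine ⟨part1, ?_⟩
  intro hn
  have hsymmN : ∀ {u v : V}, (u ≠ v ∧ ¬ G.Adj u v) → (v ≠ u ∧ ¬ G.Adj v u) :=
    fun h => ⟨h.1.symm, fun a => h.2 a.symm⟩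
  have hneN : ∀ {u v : V}, (u ≠ v ∧ ¬ G.Adj u v) → u ≠ v := fun h => h.1
  have hM3' : ∀ u1 v1 u2 v2 u3 v3 : V, (u1 ≠ v1 ∧ ¬ G.Adj u1 v1) → (u2 ≠ v2 ∧ ¬ G.Adj u2 v2) →
      (u3 ≠ v3 ∧ ¬ G.Adj u3 v3) →
      u1 ≠ u2 → u1 ≠ v2 → v1 ≠ u2 → v1 ≠ v2 → u1 ≠ u3 → u1 ≠ v3 → v1 ≠ u3 → v1 ≠ v3 →
      u2 ≠ u3 → u2 ≠ v3 → v2 ≠ u3 → v2 ≠ v3 → False := by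
    intro u1 v1 u2 v2 u3 v3 e1 e2 e3 d1 d2 d3 d4 d5 d6 d7 d8 d9 d10 d11 d12
    have := merge3 G u1 v1 u2 v2 u3 v3 e1 e2 e3 d1 d2 d3 d4 d5 d6 d7 d8 d9 d10 d11 d12
    omega
  have hR4' : ∀ p q : V, ∃ u v, u ≠ p ∧ u ≠ q ∧ v ≠ p ∧ v ≠ q ∧
      (u ≠ v ∧ ¬ G.Adj u v) := by
    intro p q
    have hncl : ¬ G.IsClique ↑(Finset.univ \ ({p, q} : Finset V)) := by
      intro h
      have hc := hclique _ h
      rw [Finset.card_sdiff_of_subset (Finset.subset_univ _), Finset.card_univ] at hc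
      have h2 : ({p, q} : Finset V).card ≤ 2 :=
        le_trans (Finset.card_insert_le _ _) (by simp)
      omega
    obtain ⟨u, v, hu, hv, huv, hA⟩ := hnotclique _ hncl
    simp only [Finset.mem_insert, Finset.mem_singleton, not_or] at hu hv
    exact ⟨u, v, hu.1, hu.2, hv.1, hv.2, huv, hA⟩
  have hF1' : ∀ w x y z : V, (w ≠ x ∧ ¬ G.Adj w x) → (w ≠ y ∧ ¬ G.Adj w y) →
      (w ≠ z ∧ ¬ G.Adj w z) → (x ≠ y ∧ ¬ G.Adj x y) → (x ≠ z ∧ ¬ G.Adj x z) →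
      (y ≠ z ∧ ¬ G.Adj y z) → False := by
    intro w x y z e1 e2 e3 e4 e5 e6
    have := mergeI4 G w x y z e1 e2 e3 e4 e5 e6
    omega
  have hF2' : ∀ x y z u v : V, (x ≠ y ∧ ¬ G.Adj x y) → (x ≠ z ∧ ¬ G.Adj x z) →
      (y ≠ z ∧ ¬ G.Adj y z) → (u ≠ v ∧ ¬ G.Adj u v) →
      u ≠ x → u ≠ y → u ≠ z → v ≠ x → v ≠ y → v ≠ z → False := by
    intro x y z u v e1 e2 e3 e4 d1 d2 d3 d4 d5 d6
    have := mergeI3pair G x y z u v e1 e2 e3 e4 d1 d2 d3 d4 d5 d6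
    omega
  have hT' := noTriangle (fun u v : V => u ≠ v ∧ ¬ G.Adj u v) hsymmN hneN hM3' hR4' hF1' hF2'
  have hpos : 0 < Fintype.card V := by omega
  obtain ⟨w0⟩ := Fintype.card_pos_iff.mp hpos
  obtain ⟨v0, v1, v2, v3, v4,
    ⟨d01, d02, d03, d04, d12, d13, d14, d23, d24, d34⟩,
    ⟨e01, e12, e23, e34, e40⟩, ⟨f02, f03, f13, f14, f24⟩, conf⟩ :=
    structC5 (fun u v : V => u ≠ v ∧ ¬ G.Adj u v) hsymmN hneN hM3' hR4' hT' w0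
  have A02 : G.Adj v0 v2 := by by_contra hA; exact f02 ⟨d02, hA⟩
  have A03 : G.Adj v0 v3 := by by_contra hA; exact f03 ⟨d03, hA⟩
  have A13 : G.Adj v1 v3 := by by_contra hA; exact f13 ⟨d13, hA⟩
  have A14 : G.Adj v1 v4 := by by_contra hA; exact f14 ⟨d14, hA⟩
  have A24 : G.Adj v2 v4 := by by_contra hA; exact f24 ⟨d24, hA⟩
  have hs5 : ({v0, v1, v2, v3, v4} : Finset V).card = 5 := by
    rw [Finset.card_insert_of_notMem (by simp [d01, d02, d03, d04]),
      Finset.card_insert_of_notMem (by simp [d12, d13, d14]),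
      Finset.card_insert_of_notMem (by simp [d23, d24]),
      Finset.card_insert_of_notMem (by simp [d34]), Finset.card_singleton]
  have h5n : 5 ≤ n := by
    rw [← hs5]; exact Finset.card_le_univ _
  have hk3 : 3 ≤ chi G := by omega
  exact build_iso G (chi G) hn hk3 v0 v1 v2 v3 v4 d01 d02 d03 d04 d12 d13 d14 d23 d24 d34
    e01.2 e12.2 e23.2 e34.2 e40.2 A02 A03 A13 A14 A24
    (fun u v huv hA => conf u v ⟨huv, hA⟩)
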